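/- For any HOL proposition φ (a HOL term of type bool), with free type variables α1,…,αn and free term variables x1:A1,…,xn:An, the translation of φ as a type is a well-formed Dedukti type: Σ | α1:type,…,αn:type, x1:||A1||,…,xn:||An|| ⊢ ||φ|| : Type, where ||φ|| = proof |φ|. -/

import Mathlib

set_option autoImplicit false

namespace HolDk

/-! ### Dedukti: the λΠ-calculus modulo rewriting, with de Bruijn indices.

Terms `M, N, A, B ::= x | c | Type | Kind | Πx:A.B | λx:A.M | M N`. -/

inductive DTm : Type
  | var   : ℕ → DTm
  | const : ℕ → DTm
  | type  : DTm
  | kind  : DTm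
  | pi    : DTm → DTm → DTm
  | lam   : DTm → DTm → DTm
  | app   : DTm → DTm → DTm
  deriving DecidableEq

namespace DTm

/-- Shift the free de Bruijn indices `≥ c` up by `d`. -/
def shift (d : ℕ) : ℕ → DTm → DTm
  | c, var n => if n < c then var n else var (n + d)
  | _, const k => const k
  | _, type => type
  | _, kind => kind
  | c, pi A B => pi (shift d c A) (shift d (c+1) B)
  | c, lam A M => lam (shift d c A) (shift d (c+1) M)
  | c, app M N => app (shift d c M) (shift d c N)

/-- Lift a simultaneous substitution under one binder. -/
def liftSub (σ : ℕ → DTm) : ℕ → DTm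
  | 0 => var 0
  | n+1 => shift 1 0 (σ n)

/-- Simultaneous substitution. -/
def subst (σ : ℕ → DTm) : DTm → DTm
  | var n => σ n
  | const k => const k
  | type => type
  | kind => kind
  | pi A B => pi (subst σ A) (subst (liftSub σ) B)
  | lam A M => lam (subst σ A) (subst (liftSub σ) M)
  | app M N => app (subst σ M) (subst σ N)

/-- Substitution `[N/x]M` of `N` for the de Bruijn index `0` in `M`. -/
def subst0 (M N : DTm) : DTm :=
  subst (fun n => match n with | 0 => N | n+1 => var n) M

/-- Non-dependent product `A → B`. -/
def arr (A B : DTm) : DTm := pi A (shift 1 0 B)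

end DTm

/-- Signatures `Σ ::= · | Σ, c : A | Σ, [Γ] M ⇝ N`. -/
inductive Sig : Type
  | empty : Sig
  | pushConst : Sig → ℕ → DTm → Sig
  | pushRule : Sig → List DTm → DTm → DTm → Sig

/-- Lookup of the type of a constant in a signature. -/
def Sig.constType : Sig → ℕ → Option DTm
  | .empty, _ => none
  | .pushConst S c A, d => if d = c then some A else S.constType d
  | .pushRule S _ _ _, d => S.constType d

/-- Membership of a rewrite rule `[Γ] M ⇝ N` in a signature. -/
def Sig.hasRule : Sig → List DTm → DTm → DTm → Prop
  | .empty, _, _, _ => False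
  | .pushConst S _ _, G, M, N => S.hasRule G M N
  | .pushRule S G' M' N', G, M, N => (G = G' ∧ M = M' ∧ N = N') ∨ S.hasRule G M N

/-- Pure β-reduction (one step, contextual closure). -/
inductive RedBeta : DTm → DTm → Prop
  | beta (A M N) : RedBeta (.app (.lam A M) N) (M.subst0 N)
  | appL {M M'} (N) : RedBeta M M' → RedBeta (.app M N) (.app M' N)
  | appR (M) {N N'} : RedBeta N N' → RedBeta (.app M N) (.app M N')
  | lamTy {A A'} (M) : RedBeta A A' → RedBeta (.lam A M) (.lam A' M)
  | lamBody (A) {M M'} : RedBeta M M' → RedBeta (.lam A M) (.lam A M')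
  | piL {A A'} (B) : RedBeta A A' → RedBeta (.pi A B) (.pi A' B)
  | piR (A) {B B'} : RedBeta B B' → RedBeta (.pi A B) (.pi A B')

/-- The reduction relation `→βΣ`: β-reduction together with the rewrite rules of
the signature (one step, contextual closure). -/
inductive Red (S : Sig) : DTm → DTm → Prop
  | beta (A M N) : Red S (.app (.lam A M) N) (M.subst0 N)
  | rew {G L R} (σ : ℕ → DTm) : S.hasRule G L R → Red S (L.subst σ) (R.subst σ)
  | appL {M M'} (N) : Red S M M' → Red S (.app M N) (.app M' N)
  | appR (M) {N N'} : Red S N N' → Red S (.app M N) (.app M N')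
  | lamTy {A A'} (M) : Red S A A' → Red S (.lam A M) (.lam A' M)
  | lamBody (A) {M M'} : Red S M M' → Red S (.lam A M) (.lam A M')
  | piL {A A'} (B) : Red S A A' → Red S (.pi A B) (.pi A' B)
  | piR (A) {B B'} : Red S B B' → Red S (.pi A B) (.pi A B')

/-- The conversion `≡βΣ`: reflexive symmetric transitive closure of `→βΣ`. -/
def Conv (S : Sig) : DTm → DTm → Prop := Relation.EqvGen (Red S)

mutual
/-- Signature formation `Σ signature`. -/
inductive SigWf : Sig → Prop
  | empty : SigWf .empty
  | pushConst {S : Sig} {c : ℕ} {A s : DTm} : SigWf S → Typed S [] A s →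
      (s = DTm.type ∨ s = DTm.kind) → S.constType c = none →
      SigWf (S.pushConst c A)
  | pushRule {S : Sig} {G : List DTm} {M N A : DTm} : SigWf S →
      Typed S G M A → Typed S G N A → SigWf (S.pushRule G M N)

/-- Context formation `Σ | Γ context` (contexts are lists, head = most recent binding). -/
inductive CtxWf : Sig → List DTm → Prop
  | nil {S : Sig} : SigWf S → CtxWf S []
  | cons {S : Sig} {G : List DTm} {A : DTm} : CtxWf S G → Typed S G A DTm.type →
      CtxWf S (A :: G)

/-- The typing judgment `Σ | Γ ⊢ M : A` of the λΠ-calculus modulo rewriting. -/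
inductive Typed : Sig → List DTm → DTm → DTm → Prop
  | var {S : Sig} {G : List DTm} {n : ℕ} {A : DTm} : CtxWf S G → G[n]? = some A →
      Typed S G (.var n) (A.shift (n+1) 0)
  | const {S : Sig} {G : List DTm} {c : ℕ} {A : DTm} : CtxWf S G →
      S.constType c = some A → Typed S G (.const c) A
  | type {S : Sig} {G : List DTm} : CtxWf S G → Typed S G .type .kind
  | prod {S : Sig} {G : List DTm} {A B s : DTm} : Typed S G A .type →
      Typed S (A :: G) B s → (s = DTm.type ∨ s = DTm.kind) → Typed S G (.pi A B) s
  | abs {S : Sig} {G : List DTm} {A M B : DTm} : Typed S G A .type →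
      Typed S (A :: G) M B → Typed S G (.lam A M) (.pi A B)
  | app {S : Sig} {G : List DTm} {M N A B : DTm} : Typed S G M (.pi A B) →
      Typed S G N A → Typed S G (.app M N) (B.subst0 N)
  | conv {S : Sig} {G : List DTm} {M A B : DTm} : Typed S G M A →
      Typed S G B DTm.type → Conv S A B → Typed S G M B
end

/-! ### HOL -/

/-- HOL types: type variables, `bool`, `ind`, and arrow types. -/
inductive HTy : Type
  | tvar : ℕ → HTy
  | bool : HTy
  | ind  : HTy
  | arr  : HTy → HTy → HTy
  deriving DecidableEq

/-- HOL terms (simply typed λ-terms, de Bruijn indices for term variables),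
with the polymorphic constants `(=_A)` and `select_A`. -/
inductive HTm : Type
  | var    : ℕ → HTm
  | lam    : HTy → HTm → HTm
  | app    : HTm → HTm → HTm
  | eq     : HTy → HTm
  | select : HTy → HTm
  deriving DecidableEq

/-- The HOL proposition `M = N` (at type `A`), i.e. `(=_A) M N`. -/
def HTm.heq (A : HTy) (M N : HTm) : HTm := .app (.app (.eq A) M) N

/-- HOL typing: `Δ ⊢ M : A` where `Δ` types the term variables. -/
inductive HTyped : List HTy → HTm → HTy → Prop
  | var {D : List HTy} {n : ℕ} {A : HTy} : D[n]? = some A → HTyped D (.var n) A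
  | lam {D : List HTy} {A B : HTy} {M : HTm} : HTyped (A :: D) M B →
      HTyped D (.lam A M) (A.arr B)
  | app {D : List HTy} {A B : HTy} {M N : HTm} : HTyped D M (A.arr B) →
      HTyped D N A → HTyped D (.app M N) B
  | eq {D : List HTy} {A : HTy} : HTyped D (.eq A) (A.arr (A.arr .bool))
  | select {D : List HTy} {A : HTy} : HTyped D (.select A) ((A.arr .bool).arr A)

namespace HTm

/-- Shift the free term-variable indices `≥ c` up by `d`. -/
def shift (d : ℕ) : ℕ → HTm → HTm
  | c, var n => if n < c then var n else var (n + d)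
  | c, lam A M => lam A (shift d (c+1) M)
  | c, app M N => app (shift d c M) (shift d c N)
  | _, eq A => eq A
  | _, select A => select A

def liftSub (σ : ℕ → HTm) : ℕ → HTm
  | 0 => var 0
  | n+1 => shift 1 0 (σ n)

/-- Simultaneous capture-avoiding substitution of term variables. -/
def substF (σ : ℕ → HTm) : HTm → HTm
  | var n => σ n
  | lam A M => lam A (substF (liftSub σ) M)
  | app M N => app (substF σ M) (substF σ N)
  | eq A => eq A
  | select A => select A

/-- Substitution `[N/x]M` for the de Bruijn index `0`. -/
def subst0 (M N : HTm) : HTm :=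
  substF (fun n => match n with | 0 => N | n+1 => var n) M

/-- Simultaneous (parallel) substitution `M[M₁/x₁, …, Mₙ/xₙ]` given by a list. -/
def substL (σ : List HTm) (M : HTm) : HTm :=
  substF (fun n => (σ[n]?).getD (var n)) M

end HTm

/-- Type substitution `A[A₁/α₁, …, Aₘ/αₘ]` on HOL types. -/
def HTy.tsub (θ : List HTy) : HTy → HTy
  | .tvar n => (θ[n]?).getD (.tvar n)
  | .bool => .bool
  | .ind => .ind
  | .arr A B => .arr (A.tsub θ) (B.tsub θ)

/-- Type substitution on HOL terms. -/
def HTm.tsub (θ : List HTy) : HTm → HTm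
  | .var n => .var n
  | .lam A M => .lam (A.tsub θ) (M.tsub θ)
  | .app M N => .app (M.tsub θ) (N.tsub θ)
  | .eq A => .eq (A.tsub θ)
  | .select A => .select (A.tsub θ)

/-- All free type variables of a HOL type are `< n`. -/
def HTy.tvLt (n : ℕ) : HTy → Prop
  | .tvar j => j < n
  | .bool => True
  | .ind => True
  | .arr A B => A.tvLt n ∧ B.tvLt n

/-- All free type variables of a HOL term are `< n`. -/
def HTm.tvLt (n : ℕ) : HTm → Prop
  | .var _ => True
  | .lam A M => A.tvLt n ∧ M.tvLt n
  | .app M N => M.tvLt n ∧ N.tvLt n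
  | .eq A => A.tvLt n
  | .select A => A.tvLt n

/-- One-step β-reduction of HOL terms (contextual closure). -/
inductive HBeta : HTm → HTm → Prop
  | beta (A : HTy) (M N : HTm) : HBeta (.app (.lam A M) N) (M.subst0 N)
  | appL {M M'} (N) : HBeta M M' → HBeta (.app M N) (.app M' N)
  | appR (M) {N N'} : HBeta N N' → HBeta (.app M N) (.app M N')
  | lamBody (A) {M M'} : HBeta M M' → HBeta (.lam A M) (.lam A M')

/-- HOL derivations `Γ ⊢ φ` (Fig. 2), in an ambient term-variable context `Δ`,
with hypotheses `Γ` a finite set of propositions.  The `Subst` rule is split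
into a type-substitution rule and a term-substitution rule. -/
inductive HDeriv : List HTy → Finset HTm → HTm → Type
  | refl {D : List HTy} (A : HTy) (M : HTm) :
      HTyped D M A → HDeriv D ∅ (HTm.heq A M M)
  | absThm {D : List HTy} {G : Finset HTm} (A B : HTy) (M N : HTm) :
      HDeriv (A :: D) (G.image (HTm.shift 1 0)) (HTm.heq B M N) →
      HDeriv D G (HTm.heq (A.arr B) (.lam A M) (.lam A N))
  | appThm {D : List HTy} {G G' : Finset HTm} (A B : HTy) (F Gt M N : HTm) :
      HDeriv D G (HTm.heq (A.arr B) F Gt) → HDeriv D G' (HTm.heq A M N) →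
      HDeriv D (G ∪ G') (HTm.heq B (F.app M) (Gt.app N))
  | beta {D : List HTy} (A B : HTy) (M : HTm) :
      HTyped (A :: D) M B →
      HDeriv (A :: D) ∅ (HTm.heq B (.app (.lam A (M.shift 1 1)) (.var 0)) M)
  | assume {D : List HTy} (φ : HTm) : HTyped D φ .bool → HDeriv D {φ} φ
  | eqMp {D : List HTy} {G G' : Finset HTm} (φ ψ : HTm) :
      HDeriv D G (HTm.heq .bool φ ψ) → HDeriv D G' φ →
      HDeriv D (G ∪ G') ψ
  | deductAntiSym {D : List HTy} {G G' : Finset HTm} (φ ψ : HTm) :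
      HDeriv D G φ → HDeriv D G' ψ →
      HDeriv D (G.erase ψ ∪ G'.erase φ) (HTm.heq .bool φ ψ)
  | typeSubst {D : List HTy} {G : Finset HTm} {φ : HTm} (θ : List HTy) :
      HDeriv D G φ →
      HDeriv (D.map (HTy.tsub θ)) (G.image (HTm.tsub θ)) (φ.tsub θ)
  | termSubst {D : List HTy} {G : Finset HTm} {φ : HTm} {D' : List HTy} (σ : List HTm) :
      σ.length = D.length →
      (∀ (i : ℕ) (A : HTy), D[i]? = some A → ∃ t, σ[i]? = some t ∧ HTyped D' t A) →
      HDeriv D G φ →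
      HDeriv D' (G.image (HTm.substL σ)) (HTm.substL σ φ)

/-! ### The Dedukti signature Σ for HOL -/

def cTy : DTm := .const 0
def dBool : DTm := .const 1
def dInd : DTm := .const 2
def tArr (a b : DTm) : DTm := .app (.app (.const 3) a) b
def tTerm (a : DTm) : DTm := .app (.const 4) a
def tEq (a x y : DTm) : DTm := .app (.app (.app (.const 5) a) x) y
def tProof (p : DTm) : DTm := .app (.const 7) p
def dRefl : DTm := .const 8
def dFunExt : DTm := .const 9
def dAppThm : DTm := .const 10
def dPropExt : DTm := .const 11
def dEqMp : DTm := .const 12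
def dImp : DTm := .const 13
def dForall : DTm := .const 14

def tyArrow : DTm := DTm.arr cTy (DTm.arr cTy cTy)
def tyTerm : DTm := DTm.arr cTy .type
def tyEq : DTm := .pi cTy (tTerm (tArr (.var 0) (tArr (.var 0) dBool)))
def tySelect : DTm := .pi cTy (tTerm (tArr (tArr (.var 0) dBool) (.var 0)))
def tyProof : DTm := DTm.arr (tTerm dBool) .type
def tyRefl : DTm :=
  .pi cTy (.pi (tTerm (.var 0)) (tProof (tEq (.var 1) (.var 0) (.var 0))))
def tyFunExt : DTm :=
  .pi cTy (.pi cTy (.pi (tTerm (tArr (.var 1) (.var 0))) (.pi (tTerm (tArr (.var 2) (.var 1)))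
    (DTm.arr
      (.pi (tTerm (.var 3))
        (tProof (tEq (.var 3) (.app (.var 2) (.var 0)) (.app (.var 1) (.var 0)))))
      (tProof (tEq (tArr (.var 3) (.var 2)) (.var 1) (.var 0)))))))
def tyAppThm : DTm :=
  .pi cTy (.pi cTy (.pi (tTerm (tArr (.var 1) (.var 0))) (.pi (tTerm (tArr (.var 2) (.var 1)))
    (.pi (tTerm (.var 3)) (.pi (tTerm (.var 4))
      (DTm.arr (tProof (tEq (tArr (.var 5) (.var 4)) (.var 3) (.var 2)))
        (DTm.arr (tProof (tEq (.var 5) (.var 1) (.var 0)))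
          (tProof (tEq (.var 4) (.app (.var 3) (.var 1)) (.app (.var 2) (.var 0)))))))))))
def tyPropExt : DTm :=
  .pi (tTerm dBool) (.pi (tTerm dBool)
    (DTm.arr (DTm.arr (tProof (.var 0)) (tProof (.var 1)))
      (DTm.arr (DTm.arr (tProof (.var 0)) (tProof (.var 1)))
        (tProof (tEq dBool (.var 1) (.var 0))))))
def tyEqMp : DTm :=
  .pi (tTerm dBool) (.pi (tTerm dBool)
    (DTm.arr (tProof (tEq dBool (.var 1) (.var 0)))
      (DTm.arr (tProof (.var 1)) (tProof (.var 0)))))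

/-- The rewrite rule `[α : type, β : type] term (arrow α β) ⇝ term α → term β`
(in the context list, the head is the most recent variable `β`). -/
def arrowRuleCtx : List DTm := [cTy, cTy]
def arrowRuleL : DTm := tTerm (tArr (.var 1) (.var 0))
def arrowRuleR : DTm := DTm.arr (tTerm (.var 1)) (tTerm (.var 0))

def baseSig : Sig :=
  ((((Sig.empty.pushConst 0 .type).pushConst 1 cTy).pushConst 2 cTy).pushConst 3
    tyArrow).pushConst 4 tyTerm

/-- The HOL signature Σ:
`type : Type`, `bool ind : type`, `arrow : type → type → type`, `term : type → Type`,
`eq`, `select`, the rewrite rule `term (arrow α β) ⇝ term α → term β`,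
`proof : term bool → Type`, and `Refl`, `FunExt`, `AppThm`, `PropExt`, `EqMp`. -/
def holSig : Sig :=
  ((((((((baseSig.pushConst 5 tyEq).pushConst 6 tySelect).pushRule arrowRuleCtx
    arrowRuleL arrowRuleR).pushConst 7 tyProof).pushConst 8 tyRefl).pushConst 9
    tyFunExt).pushConst 10 tyAppThm).pushConst 11 tyPropExt).pushConst 12 tyEqMp

/-! ### The translation -/

/-- Translation `|A|` of a HOL type as a Dedukti term; `ρ` gives the Dedukti
de Bruijn index of each HOL type variable. -/
def transTy (ρ : ℕ → ℕ) : HTy → DTm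
  | .tvar j => .var (ρ j)
  | .bool => dBool
  | .ind => dInd
  | .arr A B => tArr (transTy ρ A) (transTy ρ B)

/-- Lift a variable renaming under one binder. -/
def liftVar (ρ : ℕ → ℕ) : ℕ → ℕ
  | 0 => 0
  | n+1 => ρ n + 1

/-- Translation `|M|` of a HOL term as a Dedukti term; `ρT`, `ρt` give the
Dedukti de Bruijn indices of the free HOL type resp. term variables. -/
def transTm (ρT ρt : ℕ → ℕ) : HTm → DTm
  | .var i => .var (ρt i)
  | .lam A M => .lam (tTerm (transTy ρT A)) (transTm (fun j => ρT j + 1) (liftVar ρt) M)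
  | .app M N => .app (transTm ρT ρt M) (transTm ρT ρt N)
  | .eq A => .app (.const 5) (transTy ρT A)
  | .select A => .app (.const 6) (transTy ρT A)

/-- The Dedukti context `x₁ : ‖A₁‖, …, xₖ : ‖Aₖ‖` translating a HOL
term-variable context (to be placed in front of the `n` type variables). -/
def dTermCtx : List HTy → List DTm
  | [] => []
  | A :: D => tTerm (transTy (fun j => D.length + j) A) :: dTermCtx D

/-- The Dedukti context `‖Γ‖ = h₁ : ‖φ₁‖, …` translating HOL hypotheses;
`k` is the number of HOL term variables in scope. -/
def hypCtx (k : ℕ) : List HTm → List DTm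
  | [] => []
  | φ :: rest =>
      tProof (transTm (fun j => rest.length + k + j) (fun i => rest.length + i) φ) ::
        hypCtx k rest

def mkApps (f : DTm) (args : List DTm) : DTm := args.foldl .app f

def mkTyLams : ℕ → DTm → DTm
  | 0, M => M
  | n+1, M => .lam cTy (mkTyLams n M)

/-- `λx₁ : ‖B₁‖. … λxₖ : ‖Bₖ‖. M` (the head of the list is the innermost binder). -/
def bindTerms (ρT : ℕ → ℕ) : List HTy → DTm → DTm
  | [], M => M
  | A :: D, M => bindTerms ρT D (.lam (tTerm (transTy (fun j => ρT j + D.length) A)) M)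

/-- Translation `|𝒟|` of a HOL derivation as a Dedukti proof term; `ρT`, `ρt`
give the Dedukti indices of free HOL type/term variables, and `ρh` gives the
index of the hypothesis variable `h_φ` for each hypothesis `φ`. -/
def transDeriv : {D : List HTy} → {G : Finset HTm} → {φ : HTm} →
    (ρT ρt : ℕ → ℕ) → (ρh : HTm → ℕ) → HDeriv D G φ → DTm
  | _, _, _, ρT, ρt, _, .refl A M _ =>
      .app (.app dRefl (transTy ρT A)) (transTm ρT ρt M)
  | _, _, _, ρT, ρt, ρh, .absThm A B M N d =>
      .app (.app (.app (.app (.app dFunExt (transTy ρT A)) (transTy ρT B))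
          (transTm ρT ρt (.lam A M))) (transTm ρT ρt (.lam A N)))
        (.lam (tTerm (transTy ρT A))
          (transDeriv (fun j => ρT j + 1) (liftVar ρt)
            (fun χ => ρh (HTm.substF (fun i => .var (i - 1)) χ) + 1) d))
  | _, _, _, ρT, ρt, ρh, .appThm A B F Gt M N d1 d2 =>
      mkApps dAppThm [transTy ρT A, transTy ρT B, transTm ρT ρt F, transTm ρT ρt Gt,
        transTm ρT ρt M, transTm ρT ρt N,
        transDeriv ρT ρt ρh d1, transDeriv ρT ρt ρh d2]
  | _, _, _, ρT, ρt, _, .beta _ B M _ =>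
      .app (.app dRefl (transTy ρT B)) (transTm ρT ρt M)
  | _, _, _, _, _, ρh, .assume φ _ => .var (ρh φ)
  | _, _, _, ρT, ρt, ρh, .eqMp φ ψ d1 d2 =>
      mkApps dEqMp [transTm ρT ρt φ, transTm ρT ρt ψ,
        transDeriv ρT ρt ρh d1, transDeriv ρT ρt ρh d2]
  | _, _, _, ρT, ρt, ρh, .deductAntiSym φ ψ d1 d2 =>
      mkApps dPropExt [transTm ρT ρt φ, transTm ρT ρt ψ,
        .lam (tProof (transTm ρT ρt ψ))
          (transDeriv (fun j => ρT j + 1) (fun i => ρt i + 1)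
            (fun χ => if χ = ψ then 0 else ρh χ + 1) d1),
        .lam (tProof (transTm ρT ρt φ))
          (transDeriv (fun j => ρT j + 1) (fun i => ρt i + 1)
            (fun χ => if χ = φ then 0 else ρh χ + 1) d2)]
  | _, _, _, ρT, ρt, ρh, .typeSubst θ d =>
      mkApps
        (mkTyLams θ.length
          (transDeriv (fun j => if j < θ.length then j else ρT j + θ.length)
            (fun i => ρt i + θ.length)
            (fun χ => ρh (HTm.tsub θ χ) + θ.length) d))
        (θ.reverse.map (transTy ρT))
  | _, _, _, ρT, ρt, ρh, @HDeriv.termSubst D₀ _ _ _ σ _ _ d =>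
      mkApps
        (bindTerms ρT D₀
          (transDeriv (fun j => ρT j + D₀.length)
            (fun i => if i < D₀.length then i else ρt (i - D₀.length) + D₀.length)
            (fun χ => ρh (HTm.substL σ χ) + D₀.length) d))
        (σ.reverse.map (transTm ρT ρt))

/-- All free type variables appearing in a HOL derivation are `< n`. -/
def HDeriv.tvLt (n : ℕ) : {D : List HTy} → {G : Finset HTm} → {φ : HTm} →
    HDeriv D G φ → Prop
  | _, _, _, .refl A M _ => A.tvLt n ∧ M.tvLt n
  | _, _, _, .absThm A B M N d =>
      A.tvLt n ∧ B.tvLt n ∧ M.tvLt n ∧ N.tvLt n ∧ HDeriv.tvLt n d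
  | _, _, _, .appThm A B F Gt M N d1 d2 =>
      A.tvLt n ∧ B.tvLt n ∧ F.tvLt n ∧ Gt.tvLt n ∧ M.tvLt n ∧ N.tvLt n ∧
        HDeriv.tvLt n d1 ∧ HDeriv.tvLt n d2
  | _, _, _, .beta A B M _ => A.tvLt n ∧ B.tvLt n ∧ M.tvLt n
  | _, _, _, .assume φ _ => φ.tvLt n
  | _, _, _, .eqMp φ ψ d1 d2 => φ.tvLt n ∧ ψ.tvLt n ∧ HDeriv.tvLt n d1 ∧ HDeriv.tvLt n d2
  | _, _, _, .deductAntiSym φ ψ d1 d2 =>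
      φ.tvLt n ∧ ψ.tvLt n ∧ HDeriv.tvLt n d1 ∧ HDeriv.tvLt n d2
  | _, _, _, .typeSubst θ d => (∀ A ∈ θ, A.tvLt n) ∧ HDeriv.tvLt (max θ.length n) d
  | _, _, _, .termSubst σ _ _ d => (∀ t ∈ σ, t.tvLt n) ∧ HDeriv.tvLt n d

namespace DTm

theorem shift_shift (d e : ℕ) : ∀ (M : DTm) (c : ℕ), shift d c (shift e c M) = shift (d+e) c M
  | var n, c => by
      by_cases h : n < c
      · simp [shift, h]
      · have h2 : ¬ n + e < c := by omega
        simp [shift, h, h2]; omega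
  | const k, _ => rfl
  | type, _ => rfl
  | kind, _ => rfl
  | pi A B, c => by simp [shift, shift_shift d e A c, shift_shift d e B (c+1)]
  | lam A M, c => by simp [shift, shift_shift d e A c, shift_shift d e M (c+1)]
  | app M N, c => by simp [shift, shift_shift d e M c, shift_shift d e N c]

theorem subst_shift_aux : ∀ (M : DTm) (σ : ℕ → DTm) (c : ℕ),
    (∀ m, m < c → σ m = var m) → (∀ m, c ≤ m → σ (m+1) = var m) →
    subst σ (shift 1 c M) = M
  | var n, σ, c, h1, h2 => by
      by_cases h : n < c
      · simp [shift, h, subst, h1 n h]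
      · simp [shift, h, subst, h2 n (by omega)]
  | const k, _, _, _, _ => rfl
  | type, _, _, _, _ => rfl
  | kind, _, _, _, _ => rfl
  | pi A B, σ, c, h1, h2 => by
      have l1 : ∀ m, m < c + 1 → liftSub σ m = var m := by
        intro m hm
        cases m with
        | zero => rfl
        | succ k => simp [liftSub, h1 k (by omega), shift]
      have l2 : ∀ m, c + 1 ≤ m → liftSub σ (m+1) = var m := by
        intro m hm
        obtain ⟨k, rfl⟩ : ∃ k, m = k + 1 := ⟨m - 1, by omega⟩
        simp [liftSub, h2 k (by omega), shift]
      simp [shift, subst, subst_shift_aux A σ c h1 h2, subst_shift_aux B (liftSub σ) (c+1) l1 l2]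
  | lam A M, σ, c, h1, h2 => by
      have l1 : ∀ m, m < c + 1 → liftSub σ m = var m := by
        intro m hm
        cases m with
        | zero => rfl
        | succ k => simp [liftSub, h1 k (by omega), shift]
      have l2 : ∀ m, c + 1 ≤ m → liftSub σ (m+1) = var m := by
        intro m hm
        obtain ⟨k, rfl⟩ : ∃ k, m = k + 1 := ⟨m - 1, by omega⟩
        simp [liftSub, h2 k (by omega), shift]
      simp [shift, subst, subst_shift_aux A σ c h1 h2, subst_shift_aux M (liftSub σ) (c+1) l1 l2]
  | app M N, σ, c, h1, h2 => by
      simp [shift, subst, subst_shift_aux M σ c h1 h2, subst_shift_aux N σ c h1 h2]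

theorem subst0_shift (M N : DTm) : (shift 1 0 M).subst0 N = M := by
  apply subst_shift_aux
  · intro m hm; omega
  · intro m _; rfl

end DTm

theorem transTy_shift (d : ℕ) (ρ : ℕ → ℕ) :
    ∀ A : HTy, DTm.shift d 0 (transTy ρ A) = transTy (fun j => ρ j + d) A
  | .tvar j => by simp [transTy, DTm.shift]
  | .bool => rfl
  | .ind => rfl
  | .arr A B => by
      simp [transTy, tArr, DTm.shift, transTy_shift d ρ A, transTy_shift d ρ B]

theorem tTerm_transTy_shift (d : ℕ) (ρ : ℕ → ℕ) (A : HTy) :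
    DTm.shift d 0 (tTerm (transTy ρ A)) = tTerm (transTy (fun j => ρ j + d) A) := by
  simp [tTerm, DTm.shift, transTy_shift]
structure SigOk (S : Sig) : Prop where
  h0 : S.constType 0 = some .type
  h1 : S.constType 1 = some cTy
  h2 : S.constType 2 = some cTy
  h3 : S.constType 3 = some tyArrow
  h4 : S.constType 4 = some tyTerm

structure SigOk2 (S : Sig) extends SigOk S : Prop where
  h5 : S.constType 5 = some tyEq
  h6 : S.constType 6 = some tySelect
  h7 : S.constType 7 = some tyProof
  hrule : S.hasRule arrowRuleCtx arrowRuleL arrowRuleR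

section Helpers

variable {S : Sig} {G : List DTm}

theorem tcTy (hk : SigOk S) (hG : CtxWf S G) : Typed S G cTy DTm.type :=
  Typed.const hG hk.h0

theorem tBool (hk : SigOk S) (hG : CtxWf S G) : Typed S G dBool cTy :=
  Typed.const hG hk.h1

theorem tInd (hk : SigOk S) (hG : CtxWf S G) : Typed S G dInd cTy :=
  Typed.const hG hk.h2

theorem tArrT (hk : SigOk S) (hG : CtxWf S G) {a b : DTm}
    (ha : Typed S G a cTy) (hb : Typed S G b cTy) : Typed S G (tArr a b) cTy := by
  have hc : Typed S G (.const 3) (.pi cTy (.pi cTy cTy)) := Typed.const hG hk.h3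
  have h1 : Typed S G (.app (.const 3) a) (.pi cTy cTy) := Typed.app hc ha
  exact Typed.app h1 hb

theorem tTermT (hk : SigOk S) (hG : CtxWf S G) {a : DTm}
    (ha : Typed S G a cTy) : Typed S G (tTerm a) DTm.type := by
  have hc : Typed S G (.const 4) (.pi cTy DTm.type) := Typed.const hG hk.h4
  exact Typed.app hc ha

theorem tProofT (hk : SigOk2 S) (hG : CtxWf S G) {p : DTm}
    (hp : Typed S G p (tTerm dBool)) : Typed S G (tProof p) DTm.type := by
  have hc : Typed S G (.const 7) (.pi (tTerm dBool) DTm.type) := Typed.const hG hk.h7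
  exact Typed.app hc hp

theorem convArr {a b : DTm} (hr : S.hasRule arrowRuleCtx arrowRuleL arrowRuleR) :
    Conv S (tTerm (tArr a b)) (.pi (tTerm a) (DTm.shift 1 0 (tTerm b))) :=
  Relation.EqvGen.rel _ _
    (Red.rew (fun n => match n with | 0 => b | 1 => a | n+2 => DTm.var n) hr)

theorem tAppArr (hk : SigOk2 S) (hG : CtxWf S G) {a b M N : DTm}
    (ha : Typed S G a cTy) (hM : Typed S G M (tTerm (tArr a b)))
    (hN : Typed S G N (tTerm a))
    (hb : Typed S (tTerm a :: G) (DTm.shift 1 0 (tTerm b)) DTm.type) :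
    Typed S G (.app M N) (tTerm b) := by
  have hpi : Typed S G (.pi (tTerm a) (DTm.shift 1 0 (tTerm b))) DTm.type :=
    Typed.prod (tTermT hk.toSigOk hG ha) hb (Or.inl rfl)
  have hM' := Typed.conv hM hpi (convArr hk.hrule)
  have happ := Typed.app hM' hN
  rwa [DTm.subst0_shift] at happ

theorem tEqT (hk : SigOk2 S) (hG : CtxWf S G) {a x y : DTm}
    (ha : Typed S G a cTy)
    (ha1 : Typed S (tTerm a :: G) (DTm.shift 1 0 a) cTy)
    (hx : Typed S G x (tTerm a)) (hy : Typed S G y (tTerm a)) :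
    Typed S G (tEq a x y) (tTerm dBool) := by
  have hG1 : CtxWf S (tTerm a :: G) := CtxWf.cons hG (tTermT hk.toSigOk hG ha)
  have hc : Typed S G (.const 5) (.pi cTy (tTerm (tArr (.var 0) (tArr (.var 0) dBool)))) :=
    Typed.const hG hk.h5
  have h1 : Typed S G (.app (.const 5) a) (tTerm (tArr a (tArr a dBool))) :=
    Typed.app hc ha
  have h2 : Typed S G (.app (.app (.const 5) a) x) (tTerm (tArr a dBool)) := by
    refine tAppArr hk hG ha h1 hx ?_
    exact tTermT hk.toSigOk hG1 (tArrT hk.toSigOk hG1 ha1 (tBool hk.toSigOk hG1))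
  refine tAppArr hk hG ha h2 hy ?_
  exact tTermT hk.toSigOk hG1 (tBool hk.toSigOk hG1)

end Helpers

theorem tVar {S : Sig} {G : List DTm} {n : ℕ} {A B : DTm} (hG : CtxWf S G)
    (h : G[n]? = some A) (hs : A.shift (n+1) 0 = B) : Typed S G (.var n) B :=
  hs ▸ Typed.var hG h
section Trans

variable {S : Sig}

/-- Hypothesis: context gives sort `type` to every translated type variable. -/
def TVarOk (G : List DTm) (ρ : ℕ → ℕ) (n : ℕ) : Prop :=
  ∀ j < n, ∃ C, G[ρ j]? = some C ∧ C.shift (ρ j + 1) 0 = cTy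

/-- Hypothesis: context gives type `term |B|` to every translated term variable. -/
def TmVarOk (G : List DTm) (ρT ρt : ℕ → ℕ) (Δ : List HTy) : Prop :=
  ∀ i B, Δ[i]? = some B →
    ∃ C, G[ρt i]? = some C ∧ C.shift (ρt i + 1) 0 = tTerm (transTy ρT B)

theorem typTy (hk : SigOk S) {G : List DTm} (hG : CtxWf S G) {n : ℕ} {ρ : ℕ → ℕ}
    (hv : TVarOk G ρ n) : ∀ {A : HTy}, A.tvLt n → Typed S G (transTy ρ A) cTy
  | .tvar j, h => by
      obtain ⟨C, hC, hs⟩ := hv j h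
      have hvar := Typed.var (S := S) hG hC
      rwa [hs] at hvar
  | .bool, _ => tBool hk hG
  | .ind, _ => tInd hk hG
  | .arr A B, h => tArrT hk hG (typTy hk hG hv h.1) (typTy hk hG hv h.2)

theorem tvarOk_cons {G : List DTm} {ρ : ℕ → ℕ} {n : ℕ} (x : DTm)
    (hv : TVarOk G ρ n) : TVarOk (x :: G) (fun j => ρ j + 1) n := by
  intro j hj
  obtain ⟨C, hC, hs⟩ := hv j hj
  refine ⟨C, by simpa using hC, ?_⟩
  have : DTm.shift 1 0 (C.shift (ρ j + 1) 0) = C.shift (1 + (ρ j + 1)) 0 :=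
    DTm.shift_shift 1 (ρ j + 1) C 0
  rw [hs] at this
  have e : 1 + (ρ j + 1) = ρ j + 1 + 1 := by omega
  rw [e] at this
  exact this.symm

theorem tmvarOk_cons {G : List DTm} {ρT ρt : ℕ → ℕ} {Δ : List HTy} (A : HTy)
    (hv : TmVarOk G ρT ρt Δ) :
    TmVarOk (tTerm (transTy ρT A) :: G) (fun j => ρT j + 1) (liftVar ρt) (A :: Δ) := by
  intro i B hB
  cases i with
  | zero =>
      obtain rfl : A = B := by simpa using hB
      refine ⟨tTerm (transTy ρT A), by simp [liftVar], ?_⟩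
      show DTm.shift 1 0 (tTerm (transTy ρT A)) = _
      rw [tTerm_transTy_shift]
  | succ k =>
      obtain ⟨C, hC, hs⟩ := hv k B (by simpa using hB)
      refine ⟨C, by simpa [liftVar] using hC, ?_⟩
      show C.shift (ρt k + 1 + 1) 0 = _
      have : DTm.shift 1 0 (C.shift (ρt k + 1) 0) = C.shift (1 + (ρt k + 1)) 0 :=
        DTm.shift_shift 1 (ρt k + 1) C 0
    
      rw [hs, tTerm_transTy_shift] at this
      have e : 1 + (ρt k + 1) = ρt k + 1 + 1 := by omega
      rw [e] at this
      exact this.symm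

theorem hty_tvLt {n : ℕ} : ∀ {Δ : List HTy} {M : HTm} {A : HTy},
    HTyped Δ M A → M.tvLt n → (∀ B ∈ Δ, B.tvLt n) → A.tvLt n := by
  intro Δ M A h
  induction h with
  | var hl =>
      intro _ hΔ
      obtain ⟨hn, rfl⟩ := List.getElem?_eq_some_iff.mp hl
      exact hΔ _ (List.getElem_mem hn)
  | lam _ ih =>
      intro hM hΔ
      refine ⟨hM.1, ih hM.2 ?_⟩
      intro B hB
      rcases List.mem_cons.1 hB with rfl | hB
      · exact hM.1
      · exact hΔ _ hB
  | app hM hN ihM ihN =>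
      intro hMN hΔ
      exact (ihM hMN.1 hΔ).2
  | eq => intro hA _; exact ⟨hA, hA, trivial⟩
  | select => intro hA _; exact ⟨⟨hA, trivial⟩, hA⟩

end Trans
section MainTm

variable {S : Sig}

theorem typTm (hk : SigOk2 S) {n : ℕ} {Δ : List HTy} {M : HTm} {A : HTy}
    (ht : HTyped Δ M A) :
    ∀ {G : List DTm} {ρT ρt : ℕ → ℕ}, CtxWf S G → TVarOk G ρT n →
      TmVarOk G ρT ρt Δ → M.tvLt n → (∀ B ∈ Δ, B.tvLt n) →
      Typed S G (transTm ρT ρt M) (tTerm (transTy ρT A)) := by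
  induction ht with
  | var hl =>
      intro G ρT ρt hG hvT hvt hM hΔ
      obtain ⟨C, hC, hs⟩ := hvt _ _ hl
      have hvar := Typed.var (S := S) hG hC
      rwa [hs] at hvar
  | @lam Δ A B M ht ih =>
      intro G ρT ρt hG hvT hvt hM hΔ
      have hA : A.tvLt n := hM.1
      have hΔ' : ∀ B' ∈ A :: Δ, B'.tvLt n := by
        intro B' hB'
        rcases List.mem_cons.1 hB' with rfl | hB'
        · exact hA
        · exact hΔ _ hB'
      have hB : B.tvLt n := hty_tvLt ht hM.2 hΔ'
      have hta : Typed S G (transTy ρT A) cTy := typTy hk.toSigOk hG hvT hA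
      have htTa : Typed S G (tTerm (transTy ρT A)) DTm.type := tTermT hk.toSigOk hG hta
      have hG' : CtxWf S (tTerm (transTy ρT A) :: G) := CtxWf.cons hG htTa
      have hbody := ih hG' (tvarOk_cons _ hvT) (tmvarOk_cons A hvt) hM.2 hΔ'
      rw [← tTerm_transTy_shift 1 ρT B] at hbody
      have habs := Typed.abs htTa hbody
      have htarget : Typed S G (tTerm (tArr (transTy ρT A) (transTy ρT B))) DTm.type :=
        tTermT hk.toSigOk hG (tArrT hk.toSigOk hG hta (typTy hk.toSigOk hG hvT hB))
      exact Typed.conv habs htarget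
        (Relation.EqvGen.symm _ _ (convArr hk.hrule))
  | @app Δ A B M N htM htN ihM ihN =>
      intro G ρT ρt hG hvT hvt hMN hΔ
      have hAB : (A.arr B).tvLt n := hty_tvLt htM hMN.1 hΔ
      have hta : Typed S G (transTy ρT A) cTy := typTy hk.toSigOk hG hvT hAB.1
      have hG' : CtxWf S (tTerm (transTy ρT A) :: G) :=
        CtxWf.cons hG (tTermT hk.toSigOk hG hta)
      refine tAppArr hk hG hta (ihM hG hvT hvt hMN.1 hΔ) (ihN hG hvT hvt hMN.2 hΔ) ?_
      rw [tTerm_transTy_shift 1 ρT B]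
      exact tTermT hk.toSigOk hG' (typTy hk.toSigOk hG' (tvarOk_cons _ hvT) hAB.2)
  | @eq Δ A =>
      intro G ρT ρt hG hvT hvt hM hΔ
      have hc : Typed S G (.const 5) (.pi cTy (tTerm (tArr (.var 0) (tArr (.var 0) dBool)))) :=
        Typed.const hG hk.h5
      exact Typed.app hc (typTy hk.toSigOk hG hvT hM)
  | @select Δ A =>
      intro G ρT ρt hG hvT hvt hM hΔ
      have hc : Typed S G (.const 6)
          (.pi cTy (tTerm (tArr (tArr (.var 0) dBool) (.var 0)))) :=
        Typed.const hG hk.h6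
      exact Typed.app hc (typTy hk.toSigOk hG hvT hM)

end MainTm
def sg1 : Sig := Sig.empty.pushConst 0 .type
def sg2 : Sig := sg1.pushConst 1 cTy
def sg3 : Sig := sg2.pushConst 2 cTy
def sg4 : Sig := sg3.pushConst 3 tyArrow
def sg6 : Sig := baseSig.pushConst 5 tyEq
def sg7 : Sig := sg6.pushConst 6 tySelect
def sg8 : Sig := sg7.pushRule arrowRuleCtx arrowRuleL arrowRuleR
def sg9 : Sig := sg8.pushConst 7 tyProof
def sg10 : Sig := sg9.pushConst 8 tyRefl
def sg11 : Sig := sg10.pushConst 9 tyFunExt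
def sg12 : Sig := sg11.pushConst 10 tyAppThm
def sg13 : Sig := sg12.pushConst 11 tyPropExt

example : baseSig = sg4.pushConst 4 tyTerm := rfl
example : holSig = sg13.pushConst 12 tyEqMp := rfl

theorem sigOk_base : SigOk baseSig := ⟨rfl, rfl, rfl, rfl, rfl⟩
theorem sigOk_sg6 : SigOk sg6 := ⟨rfl, rfl, rfl, rfl, rfl⟩
theorem sigOk_sg7 : SigOk sg7 := ⟨rfl, rfl, rfl, rfl, rfl⟩
theorem sigOk_sg8 : SigOk sg8 := ⟨rfl, rfl, rfl, rfl, rfl⟩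

theorem hasRule_sg9 : sg9.hasRule arrowRuleCtx arrowRuleL arrowRuleR :=
  Or.inl ⟨rfl, rfl, rfl⟩

theorem sigOk2_sg9 : SigOk2 sg9 :=
  ⟨⟨rfl, rfl, rfl, rfl, rfl⟩, rfl, rfl, rfl, Or.inl ⟨rfl, rfl, rfl⟩⟩
theorem sigOk2_sg10 : SigOk2 sg10 :=
  ⟨⟨rfl, rfl, rfl, rfl, rfl⟩, rfl, rfl, rfl, Or.inl ⟨rfl, rfl, rfl⟩⟩
theorem sigOk2_sg11 : SigOk2 sg11 :=
  ⟨⟨rfl, rfl, rfl, rfl, rfl⟩, rfl, rfl, rfl, Or.inl ⟨rfl, rfl, rfl⟩⟩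
theorem sigOk2_sg12 : SigOk2 sg12 :=
  ⟨⟨rfl, rfl, rfl, rfl, rfl⟩, rfl, rfl, rfl, Or.inl ⟨rfl, rfl, rfl⟩⟩
theorem sigOk2_sg13 : SigOk2 sg13 :=
  ⟨⟨rfl, rfl, rfl, rfl, rfl⟩, rfl, rfl, rfl, Or.inl ⟨rfl, rfl, rfl⟩⟩
theorem sigOk2_holSig : SigOk2 holSig :=
  ⟨⟨rfl, rfl, rfl, rfl, rfl⟩, rfl, rfl, rfl, Or.inl ⟨rfl, rfl, rfl⟩⟩
theorem sigWf_sg1 : SigWf sg1 :=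
  SigWf.pushConst .empty (Typed.type (CtxWf.nil .empty)) (Or.inr rfl) rfl
theorem sigWf_sg2 : SigWf sg2 :=
  SigWf.pushConst sigWf_sg1 (Typed.const (CtxWf.nil sigWf_sg1) rfl) (Or.inl rfl) rfl
theorem sigWf_sg3 : SigWf sg3 :=
  SigWf.pushConst sigWf_sg2 (Typed.const (CtxWf.nil sigWf_sg2) rfl) (Or.inl rfl) rfl

theorem sigWf_sg4 : SigWf sg4 := by
  have w := sigWf_sg3
  have n0 : CtxWf sg3 [] := CtxWf.nil w
  have c0 : Typed sg3 [] cTy DTm.type := Typed.const n0 rfl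
  have n1 : CtxWf sg3 [cTy] := CtxWf.cons n0 c0
  have c1 : Typed sg3 [cTy] cTy DTm.type := Typed.const n1 rfl
  have n2 : CtxWf sg3 [cTy, cTy] := CtxWf.cons n1 c1
  have c2 : Typed sg3 [cTy, cTy] cTy DTm.type := Typed.const n2 rfl
  have hT : Typed sg3 [] (.pi cTy (.pi cTy cTy)) DTm.type :=
    Typed.prod c0 (Typed.prod c1 c2 (Or.inl rfl)) (Or.inl rfl)
  exact SigWf.pushConst w hT (Or.inl rfl) rfl

theorem sigWf_base : SigWf baseSig := by
  have w := sigWf_sg4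
  have n0 : CtxWf sg4 [] := CtxWf.nil w
  have c0 : Typed sg4 [] cTy DTm.type := Typed.const n0 rfl
  have n1 : CtxWf sg4 [cTy] := CtxWf.cons n0 c0
  have hT : Typed sg4 [] (.pi cTy DTm.type) DTm.kind :=
    Typed.prod c0 (Typed.type n1) (Or.inr rfl)
  exact SigWf.pushConst w hT (Or.inr rfl) rfl

theorem sigWf_sg6 : SigWf sg6 := by
  have w := sigWf_base
  have hk := sigOk_base
  have n0 : CtxWf baseSig [] := CtxWf.nil w
  have n1 : CtxWf baseSig [cTy] := CtxWf.cons n0 (tcTy hk n0)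
  have v0 : Typed baseSig [cTy] (.var 0) cTy := tVar (A := cTy) n1 (by simp) rfl
  have body : Typed baseSig [cTy] (tTerm (tArr (.var 0) (tArr (.var 0) dBool))) DTm.type :=
    tTermT hk n1 (tArrT hk n1 v0 (tArrT hk n1 v0 (tBool hk n1)))
  have hT : Typed baseSig [] (.pi cTy (tTerm (tArr (.var 0) (tArr (.var 0) dBool)))) DTm.type :=
    Typed.prod (tcTy hk n0) body (Or.inl rfl)
  exact SigWf.pushConst w hT (Or.inl rfl) rfl

theorem sigWf_sg7 : SigWf sg7 := by
  have w := sigWf_sg6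
  have hk := sigOk_sg6
  have n0 : CtxWf sg6 [] := CtxWf.nil w
  have n1 : CtxWf sg6 [cTy] := CtxWf.cons n0 (tcTy hk n0)
  have v0 : Typed sg6 [cTy] (.var 0) cTy := tVar (A := cTy) n1 (by simp) rfl
  have body : Typed sg6 [cTy] (tTerm (tArr (tArr (.var 0) dBool) (.var 0))) DTm.type :=
    tTermT hk n1 (tArrT hk n1 (tArrT hk n1 v0 (tBool hk n1)) v0)
  have hT : Typed sg6 [] (.pi cTy (tTerm (tArr (tArr (.var 0) dBool) (.var 0)))) DTm.type :=
    Typed.prod (tcTy hk n0) body (Or.inl rfl)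
  exact SigWf.pushConst w hT (Or.inl rfl) rfl

theorem sigWf_sg8 : SigWf sg8 := by
  have w := sigWf_sg7
  have hk := sigOk_sg7
  have n0 : CtxWf sg7 [] := CtxWf.nil w
  have n1 : CtxWf sg7 [cTy] := CtxWf.cons n0 (tcTy hk n0)
  have n2 : CtxWf sg7 [cTy, cTy] := CtxWf.cons n1 (tcTy hk n1)
  have v0 : Typed sg7 [cTy, cTy] (.var 0) cTy := tVar (A := cTy) n2 (by simp) rfl
  have v1 : Typed sg7 [cTy, cTy] (.var 1) cTy := tVar (A := cTy) n2 (by simp) rfl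
  have hL : Typed sg7 [cTy, cTy] arrowRuleL DTm.type := tTermT hk n2 (tArrT hk n2 v1 v0)
  have t1 : Typed sg7 [cTy, cTy] (tTerm (.var 1)) DTm.type := tTermT hk n2 v1
  have n3 : CtxWf sg7 [tTerm (.var 1), cTy, cTy] := CtxWf.cons n2 t1
  have v1' : Typed sg7 [tTerm (.var 1), cTy, cTy] (.var 1) cTy :=
    tVar (A := cTy) n3 (by simp) rfl
  have hR : Typed sg7 [cTy, cTy] (.pi (tTerm (.var 1)) (tTerm (.var 1))) DTm.type :=
    Typed.prod t1 (tTermT hk n3 v1') (Or.inl rfl)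
  exact SigWf.pushRule w hL hR

theorem sigWf_sg9 : SigWf sg9 := by
  have w := sigWf_sg8
  have hk := sigOk_sg8
  have n0 : CtxWf sg8 [] := CtxWf.nil w
  have t0 : Typed sg8 [] (tTerm dBool) DTm.type := tTermT hk n0 (tBool hk n0)
  have n1 : CtxWf sg8 [tTerm dBool] := CtxWf.cons n0 t0
  have hT : Typed sg8 [] (.pi (tTerm dBool) DTm.type) DTm.kind :=
    Typed.prod t0 (Typed.type n1) (Or.inr rfl)
  exact SigWf.pushConst w hT (Or.inr rfl) rfl

theorem sigWf_sg10 : SigWf sg10 := by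
  have w := sigWf_sg9
  have hk := sigOk2_sg9
  have hk0 := hk.toSigOk
  have n0 : CtxWf sg9 [] := CtxWf.nil w
  have n1 : CtxWf sg9 [cTy] := CtxWf.cons n0 (tcTy hk0 n0)
  have v0 : Typed sg9 [cTy] (.var 0) cTy := tVar (A := cTy) n1 (by simp) rfl
  have t0 : Typed sg9 [cTy] (tTerm (.var 0)) DTm.type := tTermT hk0 n1 v0
  have n2 : CtxWf sg9 [tTerm (.var 0), cTy] := CtxWf.cons n1 t0
  have v1 : Typed sg9 [tTerm (.var 0), cTy] (.var 1) cTy := tVar (A := cTy) n2 (by simp) rfl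
  have x0 : Typed sg9 [tTerm (.var 0), cTy] (.var 0) (tTerm (.var 1)) :=
    tVar (A := tTerm (.var 0)) n2 (by simp) rfl
  have n3 : CtxWf sg9 [tTerm (.var 1), tTerm (.var 0), cTy] :=
    CtxWf.cons n2 (tTermT hk0 n2 v1)
  have ha1 : Typed sg9 [tTerm (.var 1), tTerm (.var 0), cTy] (DTm.shift 1 0 (.var 1)) cTy :=
    tVar (A := cTy) n3 (by simp) rfl
  have heq := tEqT hk n2 v1 ha1 x0 x0
  have body := tProofT hk n2 heq
  have hT : Typed sg9 []
      (.pi cTy (.pi (tTerm (.var 0)) (tProof (tEq (.var 1) (.var 0) (.var 0))))) DTm.type :=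
    Typed.prod (tcTy hk0 n0) (Typed.prod t0 body (Or.inl rfl)) (Or.inl rfl)
  exact SigWf.pushConst w hT (Or.inl rfl) rfl
theorem sigWf_sg11 : SigWf sg11 := by
  have w := sigWf_sg10
  have hk := sigOk2_sg10
  have hk0 := hk.toSigOk
  have n0 : CtxWf sg10 [] := CtxWf.nil w
  have n1 : CtxWf sg10 [cTy] := CtxWf.cons n0 (tcTy hk0 n0)
  have n2 : CtxWf sg10 [cTy, cTy] := CtxWf.cons n1 (tcTy hk0 n1)
  -- G2 = [cTy, cTy]
  have v0G2 : Typed sg10 [cTy, cTy] (.var 0) cTy := tVar (A := cTy) n2 (by simp) rfl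
  have v1G2 : Typed sg10 [cTy, cTy] (.var 1) cTy := tVar (A := cTy) n2 (by simp) rfl
  have tA3 : Typed sg10 [cTy, cTy] (tTerm (tArr (.var 1) (.var 0))) DTm.type :=
    tTermT hk0 n2 (tArrT hk0 n2 v1G2 v0G2)
  -- G3 = [A3, cTy, cTy]
  have n3 : CtxWf sg10 [tTerm (tArr (.var 1) (.var 0)), cTy, cTy] := CtxWf.cons n2 tA3
  have v1G3 : Typed sg10 [tTerm (tArr (.var 1) (.var 0)), cTy, cTy] (.var 1) cTy :=
    tVar (A := cTy) n3 (by simp) rfl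
  have v2G3 : Typed sg10 [tTerm (tArr (.var 1) (.var 0)), cTy, cTy] (.var 2) cTy :=
    tVar (A := cTy) n3 (by simp) rfl
  have tA4 : Typed sg10 [tTerm (tArr (.var 1) (.var 0)), cTy, cTy]
      (tTerm (tArr (.var 2) (.var 1))) DTm.type :=
    tTermT hk0 n3 (tArrT hk0 n3 v2G3 v1G3)
  -- G4 = [A4, A3, cTy, cTy]
  have n4 : CtxWf sg10
      [tTerm (tArr (.var 2) (.var 1)), tTerm (tArr (.var 1) (.var 0)), cTy, cTy] :=
    CtxWf.cons n3 tA4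
  have v3G4 : Typed sg10
      [tTerm (tArr (.var 2) (.var 1)), tTerm (tArr (.var 1) (.var 0)), cTy, cTy]
      (.var 3) cTy := tVar (A := cTy) n4 (by simp) rfl
  have tT5 : Typed sg10
      [tTerm (tArr (.var 2) (.var 1)), tTerm (tArr (.var 1) (.var 0)), cTy, cTy]
      (tTerm (.var 3)) DTm.type := tTermT hk0 n4 v3G4
  -- G5 = [tTerm (var 3), A4, A3, cTy, cTy]
  have n5 : CtxWf sg10
      [tTerm (.var 3), tTerm (tArr (.var 2) (.var 1)), tTerm (tArr (.var 1) (.var 0)),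
        cTy, cTy] := CtxWf.cons n4 tT5
  have v4G5 : Typed sg10
      [tTerm (.var 3), tTerm (tArr (.var 2) (.var 1)), tTerm (tArr (.var 1) (.var 0)),
        cTy, cTy] (.var 4) cTy := tVar (A := cTy) n5 (by simp) rfl
  have v3G5 : Typed sg10
      [tTerm (.var 3), tTerm (tArr (.var 2) (.var 1)), tTerm (tArr (.var 1) (.var 0)),
        cTy, cTy] (.var 3) cTy := tVar (A := cTy) n5 (by simp) rfl
  have x0G5 : Typed sg10
      [tTerm (.var 3), tTerm (tArr (.var 2) (.var 1)), tTerm (tArr (.var 1) (.var 0)),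
        cTy, cTy] (.var 0) (tTerm (.var 4)) := tVar (A := tTerm (.var 3)) n5 (by simp) rfl
  have hfG5 : Typed sg10
      [tTerm (.var 3), tTerm (tArr (.var 2) (.var 1)), tTerm (tArr (.var 1) (.var 0)),
        cTy, cTy] (.var 2) (tTerm (tArr (.var 4) (.var 3))) :=
    tVar (A := tTerm (tArr (.var 1) (.var 0))) n5 (by simp) rfl
  have hgG5 : Typed sg10
      [tTerm (.var 3), tTerm (tArr (.var 2) (.var 1)), tTerm (tArr (.var 1) (.var 0)),
        cTy, cTy] (.var 1) (tTerm (tArr (.var 4) (.var 3))) :=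
    tVar (A := tTerm (tArr (.var 2) (.var 1))) n5 (by simp) rfl
  -- G6 = tTerm (var 4) :: G5
  have n6 : CtxWf sg10
      (tTerm (.var 4) :: [tTerm (.var 3), tTerm (tArr (.var 2) (.var 1)),
        tTerm (tArr (.var 1) (.var 0)), cTy, cTy]) := CtxWf.cons n5 (tTermT hk0 n5 v4G5)
  have v4G6 : Typed sg10
      (tTerm (.var 4) :: [tTerm (.var 3), tTerm (tArr (.var 2) (.var 1)),
        tTerm (tArr (.var 1) (.var 0)), cTy, cTy]) (.var 4) cTy :=
    tVar (A := cTy) n6 (by simp) rfl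
  have hbG6 : Typed sg10
      (tTerm (.var 4) :: [tTerm (.var 3), tTerm (tArr (.var 2) (.var 1)),
        tTerm (tArr (.var 1) (.var 0)), cTy, cTy])
      (DTm.shift 1 0 (tTerm (.var 3))) DTm.type := tTermT hk0 n6 v4G6
  have happ1 := tAppArr hk n5 v4G5 hfG5 x0G5 hbG6
  have happ2 := tAppArr hk n5 v4G5 hgG5 x0G5 hbG6
  -- ha1 for tEq at (var 3) in G5
  have n5' : CtxWf sg10
      (tTerm (.var 3) :: [tTerm (.var 3), tTerm (tArr (.var 2) (.var 1)),
        tTerm (tArr (.var 1) (.var 0)), cTy, cTy]) := CtxWf.cons n5 (tTermT hk0 n5 v3G5)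
  have ha1G5 : Typed sg10
      (tTerm (.var 3) :: [tTerm (.var 3), tTerm (tArr (.var 2) (.var 1)),
        tTerm (tArr (.var 1) (.var 0)), cTy, cTy]) (DTm.shift 1 0 (.var 3)) cTy :=
    tVar (A := cTy) n5' (by simp) rfl
  have heq5 := tEqT hk n5 v3G5 ha1G5 happ1 happ2
  have TD : Typed sg10
      [tTerm (tArr (.var 2) (.var 1)), tTerm (tArr (.var 1) (.var 0)), cTy, cTy]
      (.pi (tTerm (.var 3))
        (tProof (tEq (.var 3) (.app (.var 2) (.var 0)) (.app (.var 1) (.var 0)))))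
      DTm.type := Typed.prod tT5 (tProofT hk n5 heq5) (Or.inl rfl)
  -- GD = D :: G4
  have nD : CtxWf sg10
      (.pi (tTerm (.var 3))
          (tProof (tEq (.var 3) (.app (.var 2) (.var 0)) (.app (.var 1) (.var 0)))) ::
        [tTerm (tArr (.var 2) (.var 1)), tTerm (tArr (.var 1) (.var 0)), cTy, cTy]) :=
    CtxWf.cons n4 TD
  have v4D : Typed sg10
      (.pi (tTerm (.var 3))
          (tProof (tEq (.var 3) (.app (.var 2) (.var 0)) (.app (.var 1) (.var 0)))) ::
        [tTerm (tArr (.var 2) (.var 1)), tTerm (tArr (.var 1) (.var 0)), cTy, cTy])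
      (.var 4) cTy := tVar (A := cTy) nD (by simp) rfl
  have v3D : Typed sg10
      (.pi (tTerm (.var 3))
          (tProof (tEq (.var 3) (.app (.var 2) (.var 0)) (.app (.var 1) (.var 0)))) ::
        [tTerm (tArr (.var 2) (.var 1)), tTerm (tArr (.var 1) (.var 0)), cTy, cTy])
      (.var 3) cTy := tVar (A := cTy) nD (by simp) rfl
  have haD := tArrT hk0 nD v4D v3D
  have hfD : Typed sg10
      (.pi (tTerm (.var 3))
          (tProof (tEq (.var 3) (.app (.var 2) (.var 0)) (.app (.var 1) (.var 0)))) ::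
        [tTerm (tArr (.var 2) (.var 1)), tTerm (tArr (.var 1) (.var 0)), cTy, cTy])
      (.var 2) (tTerm (tArr (.var 4) (.var 3))) :=
    tVar (A := tTerm (tArr (.var 1) (.var 0))) nD (by simp) rfl
  have hgD : Typed sg10
      (.pi (tTerm (.var 3))
          (tProof (tEq (.var 3) (.app (.var 2) (.var 0)) (.app (.var 1) (.var 0)))) ::
        [tTerm (tArr (.var 2) (.var 1)), tTerm (tArr (.var 1) (.var 0)), cTy, cTy])
      (.var 1) (tTerm (tArr (.var 4) (.var 3))) :=
    tVar (A := tTerm (tArr (.var 2) (.var 1))) nD (by simp) rfl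
  have nDa : CtxWf sg10
      (tTerm (tArr (.var 4) (.var 3)) ::
        .pi (tTerm (.var 3))
            (tProof (tEq (.var 3) (.app (.var 2) (.var 0)) (.app (.var 1) (.var 0)))) ::
          [tTerm (tArr (.var 2) (.var 1)), tTerm (tArr (.var 1) (.var 0)), cTy, cTy]) :=
    CtxWf.cons nD (tTermT hk0 nD haD)
  have v5Da : Typed sg10
      (tTerm (tArr (.var 4) (.var 3)) ::
        .pi (tTerm (.var 3))
            (tProof (tEq (.var 3) (.app (.var 2) (.var 0)) (.app (.var 1) (.var 0)))) ::
          [tTerm (tArr (.var 2) (.var 1)), tTerm (tArr (.var 1) (.var 0)), cTy, cTy])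
      (.var 5) cTy := tVar (A := cTy) nDa (by simp) rfl
  have v4Da : Typed sg10
      (tTerm (tArr (.var 4) (.var 3)) ::
        .pi (tTerm (.var 3))
            (tProof (tEq (.var 3) (.app (.var 2) (.var 0)) (.app (.var 1) (.var 0)))) ::
          [tTerm (tArr (.var 2) (.var 1)), tTerm (tArr (.var 1) (.var 0)), cTy, cTy])
      (.var 4) cTy := tVar (A := cTy) nDa (by simp) rfl
  have ha1D : Typed sg10
      (tTerm (tArr (.var 4) (.var 3)) ::
        .pi (tTerm (.var 3))
            (tProof (tEq (.var 3) (.app (.var 2) (.var 0)) (.app (.var 1) (.var 0)))) ::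
          [tTerm (tArr (.var 2) (.var 1)), tTerm (tArr (.var 1) (.var 0)), cTy, cTy])
      (DTm.shift 1 0 (tArr (.var 4) (.var 3))) cTy := tArrT hk0 nDa v5Da v4Da
  have heqD := tEqT hk nD haD ha1D hfD hgD
  have TC := tProofT hk nD heqD
  have Tarr : Typed sg10
      [tTerm (tArr (.var 2) (.var 1)), tTerm (tArr (.var 1) (.var 0)), cTy, cTy]
      (.pi
        (.pi (tTerm (.var 3))
          (tProof (tEq (.var 3) (.app (.var 2) (.var 0)) (.app (.var 1) (.var 0)))))
        (tProof (tEq (tArr (.var 4) (.var 3)) (.var 2) (.var 1)))) DTm.type :=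
    Typed.prod TD TC (Or.inl rfl)
  have hT : Typed sg10 []
      (.pi cTy (.pi cTy (.pi (tTerm (tArr (.var 1) (.var 0)))
        (.pi (tTerm (tArr (.var 2) (.var 1)))
          (.pi
            (.pi (tTerm (.var 3))
              (tProof (tEq (.var 3) (.app (.var 2) (.var 0)) (.app (.var 1) (.var 0)))))
            (tProof (tEq (tArr (.var 4) (.var 3)) (.var 2) (.var 1)))))))) DTm.type :=
    Typed.prod (tcTy hk0 n0)
      (Typed.prod (tcTy hk0 n1)
        (Typed.prod tA3 (Typed.prod tA4 Tarr (Or.inl rfl)) (Or.inl rfl)) (Or.inl rfl))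
      (Or.inl rfl)
  exact SigWf.pushConst w hT (Or.inl rfl) rfl
theorem sigWf_sg12 : SigWf sg12 := by
  have w := sigWf_sg11
  have hk := sigOk2_sg11
  have hk0 := hk.toSigOk
  have n0 : CtxWf sg11 [] := CtxWf.nil w
  have n1 : CtxWf sg11 [cTy] := CtxWf.cons n0 (tcTy hk0 n0)
  have n2 : CtxWf sg11 [cTy, cTy] := CtxWf.cons n1 (tcTy hk0 n1)
  have v0G2 : Typed sg11 [cTy, cTy] (.var 0) cTy := tVar (A := cTy) n2 (by simp) rfl
  have v1G2 : Typed sg11 [cTy, cTy] (.var 1) cTy := tVar (A := cTy) n2 (by simp) rfl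
  have tA3 : Typed sg11 [cTy, cTy] (tTerm (tArr (.var 1) (.var 0))) DTm.type :=
    tTermT hk0 n2 (tArrT hk0 n2 v1G2 v0G2)
  have n3 : CtxWf sg11 [tTerm (tArr (.var 1) (.var 0)), cTy, cTy] := CtxWf.cons n2 tA3
  have v1G3 : Typed sg11 [tTerm (tArr (.var 1) (.var 0)), cTy, cTy] (.var 1) cTy :=
    tVar (A := cTy) n3 (by simp) rfl
  have v2G3 : Typed sg11 [tTerm (tArr (.var 1) (.var 0)), cTy, cTy] (.var 2) cTy :=
    tVar (A := cTy) n3 (by simp) rfl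
  have tA4 : Typed sg11 [tTerm (tArr (.var 1) (.var 0)), cTy, cTy]
      (tTerm (tArr (.var 2) (.var 1))) DTm.type :=
    tTermT hk0 n3 (tArrT hk0 n3 v2G3 v1G3)
  have n4 : CtxWf sg11
      [tTerm (tArr (.var 2) (.var 1)), tTerm (tArr (.var 1) (.var 0)), cTy, cTy] :=
    CtxWf.cons n3 tA4
  have v3G4 : Typed sg11
      [tTerm (tArr (.var 2) (.var 1)), tTerm (tArr (.var 1) (.var 0)), cTy, cTy]
      (.var 3) cTy := tVar (A := cTy) n4 (by simp) rfl
  have tT5 : Typed sg11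
      [tTerm (tArr (.var 2) (.var 1)), tTerm (tArr (.var 1) (.var 0)), cTy, cTy]
      (tTerm (.var 3)) DTm.type := tTermT hk0 n4 v3G4
  have n5 : CtxWf sg11
      [tTerm (.var 3), tTerm (tArr (.var 2) (.var 1)), tTerm (tArr (.var 1) (.var 0)),
        cTy, cTy] := CtxWf.cons n4 tT5
  have v4G5 : Typed sg11
      [tTerm (.var 3), tTerm (tArr (.var 2) (.var 1)), tTerm (tArr (.var 1) (.var 0)),
        cTy, cTy] (.var 4) cTy := tVar (A := cTy) n5 (by simp) rfl
  have tT6 : Typed sg11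
      [tTerm (.var 3), tTerm (tArr (.var 2) (.var 1)), tTerm (tArr (.var 1) (.var 0)),
        cTy, cTy] (tTerm (.var 4)) DTm.type := tTermT hk0 n5 v4G5
  -- G6 = [tTerm (var 4), tTerm (var 3), A4, A3, cTy, cTy]
  have n6 : CtxWf sg11
      [tTerm (.var 4), tTerm (.var 3), tTerm (tArr (.var 2) (.var 1)),
        tTerm (tArr (.var 1) (.var 0)), cTy, cTy] := CtxWf.cons n5 tT6
  have v5G6 : Typed sg11
      [tTerm (.var 4), tTerm (.var 3), tTerm (tArr (.var 2) (.var 1)),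
        tTerm (tArr (.var 1) (.var 0)), cTy, cTy] (.var 5) cTy :=
    tVar (A := cTy) n6 (by simp) rfl
  have v4G6 : Typed sg11
      [tTerm (.var 4), tTerm (.var 3), tTerm (tArr (.var 2) (.var 1)),
        tTerm (tArr (.var 1) (.var 0)), cTy, cTy] (.var 4) cTy :=
    tVar (A := cTy) n6 (by simp) rfl
  have a1G6 := tArrT hk0 n6 v5G6 v4G6
  have hfG6 : Typed sg11
      [tTerm (.var 4), tTerm (.var 3), tTerm (tArr (.var 2) (.var 1)),
        tTerm (tArr (.var 1) (.var 0)), cTy, cTy]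
      (.var 3) (tTerm (tArr (.var 5) (.var 4))) :=
    tVar (A := tTerm (tArr (.var 1) (.var 0))) n6 (by simp) rfl
  have hgG6 : Typed sg11
      [tTerm (.var 4), tTerm (.var 3), tTerm (tArr (.var 2) (.var 1)),
        tTerm (tArr (.var 1) (.var 0)), cTy, cTy]
      (.var 2) (tTerm (tArr (.var 5) (.var 4))) :=
    tVar (A := tTerm (tArr (.var 2) (.var 1))) n6 (by simp) rfl
  have n6a : CtxWf sg11
      (tTerm (tArr (.var 5) (.var 4)) ::
        [tTerm (.var 4), tTerm (.var 3), tTerm (tArr (.var 2) (.var 1)),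
          tTerm (tArr (.var 1) (.var 0)), cTy, cTy]) :=
    CtxWf.cons n6 (tTermT hk0 n6 a1G6)
  have v6a : Typed sg11
      (tTerm (tArr (.var 5) (.var 4)) ::
        [tTerm (.var 4), tTerm (.var 3), tTerm (tArr (.var 2) (.var 1)),
          tTerm (tArr (.var 1) (.var 0)), cTy, cTy]) (.var 6) cTy :=
    tVar (A := cTy) n6a (by simp) rfl
  have v5a : Typed sg11
      (tTerm (tArr (.var 5) (.var 4)) ::
        [tTerm (.var 4), tTerm (.var 3), tTerm (tArr (.var 2) (.var 1)),
          tTerm (tArr (.var 1) (.var 0)), cTy, cTy]) (.var 5) cTy :=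
    tVar (A := cTy) n6a (by simp) rfl
  have ha1G6 : Typed sg11
      (tTerm (tArr (.var 5) (.var 4)) ::
        [tTerm (.var 4), tTerm (.var 3), tTerm (tArr (.var 2) (.var 1)),
          tTerm (tArr (.var 1) (.var 0)), cTy, cTy])
      (DTm.shift 1 0 (tArr (.var 5) (.var 4))) cTy := tArrT hk0 n6a v6a v5a
  have heqP1 := tEqT hk n6 a1G6 ha1G6 hfG6 hgG6
  have TP1 := tProofT hk n6 heqP1
  -- G7 = P1 :: G6
  have n7 : CtxWf sg11
      (tProof (tEq (tArr (.var 5) (.var 4)) (.var 3) (.var 2)) ::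
        [tTerm (.var 4), tTerm (.var 3), tTerm (tArr (.var 2) (.var 1)),
          tTerm (tArr (.var 1) (.var 0)), cTy, cTy]) := CtxWf.cons n6 TP1
  have v6G7 : Typed sg11
      (tProof (tEq (tArr (.var 5) (.var 4)) (.var 3) (.var 2)) ::
        [tTerm (.var 4), tTerm (.var 3), tTerm (tArr (.var 2) (.var 1)),
          tTerm (tArr (.var 1) (.var 0)), cTy, cTy]) (.var 6) cTy :=
    tVar (A := cTy) n7 (by simp) rfl
  have hm7 : Typed sg11
      (tProof (tEq (tArr (.var 5) (.var 4)) (.var 3) (.var 2)) ::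
        [tTerm (.var 4), tTerm (.var 3), tTerm (tArr (.var 2) (.var 1)),
          tTerm (tArr (.var 1) (.var 0)), cTy, cTy]) (.var 2) (tTerm (.var 6)) :=
    tVar (A := tTerm (.var 3)) n7 (by simp) rfl
  have hn7 : Typed sg11
      (tProof (tEq (tArr (.var 5) (.var 4)) (.var 3) (.var 2)) ::
        [tTerm (.var 4), tTerm (.var 3), tTerm (tArr (.var 2) (.var 1)),
          tTerm (tArr (.var 1) (.var 0)), cTy, cTy]) (.var 1) (tTerm (.var 6)) :=
    tVar (A := tTerm (.var 4)) n7 (by simp) rfl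
  have n7a : CtxWf sg11
      (tTerm (.var 6) ::
        tProof (tEq (tArr (.var 5) (.var 4)) (.var 3) (.var 2)) ::
          [tTerm (.var 4), tTerm (.var 3), tTerm (tArr (.var 2) (.var 1)),
            tTerm (tArr (.var 1) (.var 0)), cTy, cTy]) :=
    CtxWf.cons n7 (tTermT hk0 n7 v6G7)
  have ha1G7 : Typed sg11
      (tTerm (.var 6) ::
        tProof (tEq (tArr (.var 5) (.var 4)) (.var 3) (.var 2)) ::
          [tTerm (.var 4), tTerm (.var 3), tTerm (tArr (.var 2) (.var 1)),
            tTerm (tArr (.var 1) (.var 0)), cTy, cTy]) (DTm.shift 1 0 (.var 6)) cTy :=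
    tVar (A := cTy) n7a (by simp) rfl
  have heqP2 := tEqT hk n7 v6G7 ha1G7 hm7 hn7
  have TP2 := tProofT hk n7 heqP2
  -- G8 = tProof (tEq (var 6) (var 2) (var 1)) :: G7
  have n8 : CtxWf sg11
      (tProof (tEq (.var 6) (.var 2) (.var 1)) ::
        tProof (tEq (tArr (.var 5) (.var 4)) (.var 3) (.var 2)) ::
          [tTerm (.var 4), tTerm (.var 3), tTerm (tArr (.var 2) (.var 1)),
            tTerm (tArr (.var 1) (.var 0)), cTy, cTy]) := CtxWf.cons n7 TP2
  have v7G8 : Typed sg11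
      (tProof (tEq (.var 6) (.var 2) (.var 1)) ::
        tProof (tEq (tArr (.var 5) (.var 4)) (.var 3) (.var 2)) ::
          [tTerm (.var 4), tTerm (.var 3), tTerm (tArr (.var 2) (.var 1)),
            tTerm (tArr (.var 1) (.var 0)), cTy, cTy]) (.var 7) cTy :=
    tVar (A := cTy) n8 (by simp) rfl
  have v6G8 : Typed sg11
      (tProof (tEq (.var 6) (.var 2) (.var 1)) ::
        tProof (tEq (tArr (.var 5) (.var 4)) (.var 3) (.var 2)) ::
          [tTerm (.var 4), tTerm (.var 3), tTerm (tArr (.var 2) (.var 1)),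
            tTerm (tArr (.var 1) (.var 0)), cTy, cTy]) (.var 6) cTy :=
    tVar (A := cTy) n8 (by simp) rfl
  have hfG8 : Typed sg11
      (tProof (tEq (.var 6) (.var 2) (.var 1)) ::
        tProof (tEq (tArr (.var 5) (.var 4)) (.var 3) (.var 2)) ::
          [tTerm (.var 4), tTerm (.var 3), tTerm (tArr (.var 2) (.var 1)),
            tTerm (tArr (.var 1) (.var 0)), cTy, cTy])
      (.var 5) (tTerm (tArr (.var 7) (.var 6))) :=
    tVar (A := tTerm (tArr (.var 1) (.var 0))) n8 (by simp) rfl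
  have hgG8 : Typed sg11
      (tProof (tEq (.var 6) (.var 2) (.var 1)) ::
        tProof (tEq (tArr (.var 5) (.var 4)) (.var 3) (.var 2)) ::
          [tTerm (.var 4), tTerm (.var 3), tTerm (tArr (.var 2) (.var 1)),
            tTerm (tArr (.var 1) (.var 0)), cTy, cTy])
      (.var 4) (tTerm (tArr (.var 7) (.var 6))) :=
    tVar (A := tTerm (tArr (.var 2) (.var 1))) n8 (by simp) rfl
  have hxG8 : Typed sg11
      (tProof (tEq (.var 6) (.var 2) (.var 1)) ::
        tProof (tEq (tArr (.var 5) (.var 4)) (.var 3) (.var 2)) ::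
          [tTerm (.var 4), tTerm (.var 3), tTerm (tArr (.var 2) (.var 1)),
            tTerm (tArr (.var 1) (.var 0)), cTy, cTy]) (.var 3) (tTerm (.var 7)) :=
    tVar (A := tTerm (.var 3)) n8 (by simp) rfl
  have hyG8 : Typed sg11
      (tProof (tEq (.var 6) (.var 2) (.var 1)) ::
        tProof (tEq (tArr (.var 5) (.var 4)) (.var 3) (.var 2)) ::
          [tTerm (.var 4), tTerm (.var 3), tTerm (tArr (.var 2) (.var 1)),
            tTerm (tArr (.var 1) (.var 0)), cTy, cTy]) (.var 2) (tTerm (.var 7)) :=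
    tVar (A := tTerm (.var 4)) n8 (by simp) rfl
  have n8a : CtxWf sg11
      (tTerm (.var 7) ::
        tProof (tEq (.var 6) (.var 2) (.var 1)) ::
          tProof (tEq (tArr (.var 5) (.var 4)) (.var 3) (.var 2)) ::
            [tTerm (.var 4), tTerm (.var 3), tTerm (tArr (.var 2) (.var 1)),
              tTerm (tArr (.var 1) (.var 0)), cTy, cTy]) :=
    CtxWf.cons n8 (tTermT hk0 n8 v7G8)
  have v7a : Typed sg11
      (tTerm (.var 7) ::
        tProof (tEq (.var 6) (.var 2) (.var 1)) ::
          tProof (tEq (tArr (.var 5) (.var 4)) (.var 3) (.var 2)) ::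
            [tTerm (.var 4), tTerm (.var 3), tTerm (tArr (.var 2) (.var 1)),
              tTerm (tArr (.var 1) (.var 0)), cTy, cTy]) (.var 7) cTy :=
    tVar (A := cTy) n8a (by simp) rfl
  have hbG8 : Typed sg11
      (tTerm (.var 7) ::
        tProof (tEq (.var 6) (.var 2) (.var 1)) ::
          tProof (tEq (tArr (.var 5) (.var 4)) (.var 3) (.var 2)) ::
            [tTerm (.var 4), tTerm (.var 3), tTerm (tArr (.var 2) (.var 1)),
              tTerm (tArr (.var 1) (.var 0)), cTy, cTy])
      (DTm.shift 1 0 (tTerm (.var 6))) DTm.type := tTermT hk0 n8a v7a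
  have happA := tAppArr hk n8 v7G8 hfG8 hxG8 hbG8
  have happB := tAppArr hk n8 v7G8 hgG8 hyG8 hbG8
  have n8b : CtxWf sg11
      (tTerm (.var 6) ::
        tProof (tEq (.var 6) (.var 2) (.var 1)) ::
          tProof (tEq (tArr (.var 5) (.var 4)) (.var 3) (.var 2)) ::
            [tTerm (.var 4), tTerm (.var 3), tTerm (tArr (.var 2) (.var 1)),
              tTerm (tArr (.var 1) (.var 0)), cTy, cTy]) :=
    CtxWf.cons n8 (tTermT hk0 n8 v6G8)
  have ha1G8 : Typed sg11
      (tTerm (.var 6) ::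
        tProof (tEq (.var 6) (.var 2) (.var 1)) ::
          tProof (tEq (tArr (.var 5) (.var 4)) (.var 3) (.var 2)) ::
            [tTerm (.var 4), tTerm (.var 3), tTerm (tArr (.var 2) (.var 1)),
              tTerm (tArr (.var 1) (.var 0)), cTy, cTy])
      (DTm.shift 1 0 (.var 6)) cTy := tVar (A := cTy) n8b (by simp) rfl
  have heqP3 := tEqT hk n8 v6G8 ha1G8 happA happB
  have TP3 := tProofT hk n8 heqP3
  have Tinner : Typed sg11
      (tProof (tEq (tArr (.var 5) (.var 4)) (.var 3) (.var 2)) ::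
        [tTerm (.var 4), tTerm (.var 3), tTerm (tArr (.var 2) (.var 1)),
          tTerm (tArr (.var 1) (.var 0)), cTy, cTy])
      (.pi (tProof (tEq (.var 6) (.var 2) (.var 1)))
        (tProof (tEq (.var 6) (.app (.var 5) (.var 3)) (.app (.var 4) (.var 2)))))
      DTm.type := Typed.prod TP2 TP3 (Or.inl rfl)
  have Touter : Typed sg11
      [tTerm (.var 4), tTerm (.var 3), tTerm (tArr (.var 2) (.var 1)),
        tTerm (tArr (.var 1) (.var 0)), cTy, cTy]
      (.pi (tProof (tEq (tArr (.var 5) (.var 4)) (.var 3) (.var 2)))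
        (.pi (tProof (tEq (.var 6) (.var 2) (.var 1)))
          (tProof (tEq (.var 6) (.app (.var 5) (.var 3)) (.app (.var 4) (.var 2))))))
      DTm.type := Typed.prod TP1 Tinner (Or.inl rfl)
  have hT : Typed sg11 []
      (.pi cTy (.pi cTy (.pi (tTerm (tArr (.var 1) (.var 0))) (.pi (tTerm (tArr (.var 2) (.var 1))) (.pi (tTerm (.var 3)) (.pi (tTerm (.var 4)) (.pi (tProof (tEq (tArr (.var 5) (.var 4)) (.var 3) (.var 2))) (.pi (tProof (tEq (.var 6) (.var 2) (.var 1))) (tProof (tEq (.var 6) (.app (.var 5) (.var 3)) (.app (.var 4) (.var 2))))))))))))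
      DTm.type :=
    Typed.prod (tcTy hk0 n0)
      (Typed.prod (tcTy hk0 n1)
        (Typed.prod tA3
          (Typed.prod tA4
            (Typed.prod tT5 (Typed.prod tT6 Touter (Or.inl rfl)) (Or.inl rfl))
            (Or.inl rfl))
          (Or.inl rfl))
        (Or.inl rfl))
      (Or.inl rfl)
  exact SigWf.pushConst w hT (Or.inl rfl) rfl
theorem sigWf_sg13 : SigWf sg13 := by
  have w := sigWf_sg12
  have hk := sigOk2_sg12
  have hk0 := hk.toSigOk
  have n0 : CtxWf sg12 [] := CtxWf.nil w
  have tb0 : Typed sg12 [] (tTerm dBool) DTm.type := tTermT hk0 n0 (tBool hk0 n0)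
  have n1 : CtxWf sg12 [tTerm dBool] := CtxWf.cons n0 tb0
  have tb1 : Typed sg12 [tTerm dBool] (tTerm dBool) DTm.type := tTermT hk0 n1 (tBool hk0 n1)
  have n2 : CtxWf sg12 [tTerm dBool, tTerm dBool] := CtxWf.cons n1 tb1
  have p0 : Typed sg12 [tTerm dBool, tTerm dBool] (.var 0) (tTerm dBool) :=
    tVar (A := tTerm dBool) n2 (by simp) rfl
  have TQdom := tProofT hk n2 p0
  have n3 : CtxWf sg12 [tProof (.var 0), tTerm dBool, tTerm dBool] := CtxWf.cons n2 TQdom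
  have p2 : Typed sg12 [tProof (.var 0), tTerm dBool, tTerm dBool] (.var 2) (tTerm dBool) :=
    tVar (A := tTerm dBool) n3 (by simp) rfl
  have TQ : Typed sg12 [tTerm dBool, tTerm dBool]
      (.pi (tProof (.var 0)) (tProof (.var 2))) DTm.type :=
    Typed.prod TQdom (tProofT hk n3 p2) (Or.inl rfl)
  have nQ : CtxWf sg12
      (.pi (tProof (.var 0)) (tProof (.var 2)) :: [tTerm dBool, tTerm dBool]) :=
    CtxWf.cons n2 TQ
  have p1 : Typed sg12
      (.pi (tProof (.var 0)) (tProof (.var 2)) :: [tTerm dBool, tTerm dBool])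
      (.var 1) (tTerm dBool) := tVar (A := tTerm dBool) nQ (by simp) rfl
  have TQ'dom := tProofT hk nQ p1
  have n4 : CtxWf sg12
      (tProof (.var 1) :: .pi (tProof (.var 0)) (tProof (.var 2)) ::
        [tTerm dBool, tTerm dBool]) := CtxWf.cons nQ TQ'dom
  have p3 : Typed sg12
      (tProof (.var 1) :: .pi (tProof (.var 0)) (tProof (.var 2)) ::
        [tTerm dBool, tTerm dBool]) (.var 3) (tTerm dBool) :=
    tVar (A := tTerm dBool) n4 (by simp) rfl
  have TQ' : Typed sg12
      (.pi (tProof (.var 0)) (tProof (.var 2)) :: [tTerm dBool, tTerm dBool])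
      (.pi (tProof (.var 1)) (tProof (.var 3))) DTm.type :=
    Typed.prod TQ'dom (tProofT hk n4 p3) (Or.inl rfl)
  have n5 : CtxWf sg12
      (.pi (tProof (.var 1)) (tProof (.var 3)) ::
        .pi (tProof (.var 0)) (tProof (.var 2)) :: [tTerm dBool, tTerm dBool]) :=
    CtxWf.cons nQ TQ'
  have p3' : Typed sg12
      (.pi (tProof (.var 1)) (tProof (.var 3)) ::
        .pi (tProof (.var 0)) (tProof (.var 2)) :: [tTerm dBool, tTerm dBool])
      (.var 3) (tTerm dBool) := tVar (A := tTerm dBool) n5 (by simp) rfl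
  have p2' : Typed sg12
      (.pi (tProof (.var 1)) (tProof (.var 3)) ::
        .pi (tProof (.var 0)) (tProof (.var 2)) :: [tTerm dBool, tTerm dBool])
      (.var 2) (tTerm dBool) := tVar (A := tTerm dBool) n5 (by simp) rfl
  have n5a : CtxWf sg12
      (tTerm dBool :: .pi (tProof (.var 1)) (tProof (.var 3)) ::
        .pi (tProof (.var 0)) (tProof (.var 2)) :: [tTerm dBool, tTerm dBool]) :=
    CtxWf.cons n5 (tTermT hk0 n5 (tBool hk0 n5))
  have ha1 : Typed sg12
      (tTerm dBool :: .pi (tProof (.var 1)) (tProof (.var 3)) ::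
        .pi (tProof (.var 0)) (tProof (.var 2)) :: [tTerm dBool, tTerm dBool])
      (DTm.shift 1 0 dBool) cTy := tBool hk0 n5a
  have heq := tEqT hk n5 (tBool hk0 n5) ha1 p3' p2'
  have TR := tProofT hk n5 heq
  have Tin : Typed sg12
      (.pi (tProof (.var 0)) (tProof (.var 2)) :: [tTerm dBool, tTerm dBool])
      (.pi (.pi (tProof (.var 1)) (tProof (.var 3)))
        (tProof (tEq dBool (.var 3) (.var 2)))) DTm.type :=
    Typed.prod TQ' TR (Or.inl rfl)
  have Tmid : Typed sg12 [tTerm dBool, tTerm dBool]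
      (.pi (.pi (tProof (.var 0)) (tProof (.var 2)))
        (.pi (.pi (tProof (.var 1)) (tProof (.var 3)))
          (tProof (tEq dBool (.var 3) (.var 2))))) DTm.type :=
    Typed.prod TQ Tin (Or.inl rfl)
  have hT : Typed sg12 []
      (.pi (tTerm dBool) (.pi (tTerm dBool)
        (.pi (.pi (tProof (.var 0)) (tProof (.var 2)))
          (.pi (.pi (tProof (.var 1)) (tProof (.var 3)))
            (tProof (tEq dBool (.var 3) (.var 2))))))) DTm.type :=
    Typed.prod tb0 (Typed.prod tb1 Tmid (Or.inl rfl)) (Or.inl rfl)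
  exact SigWf.pushConst w hT (Or.inl rfl) rfl

theorem sigWf_holSig : SigWf holSig := by
  have w := sigWf_sg13
  have hk := sigOk2_sg13
  have hk0 := hk.toSigOk
  have n0 : CtxWf sg13 [] := CtxWf.nil w
  have tb0 : Typed sg13 [] (tTerm dBool) DTm.type := tTermT hk0 n0 (tBool hk0 n0)
  have n1 : CtxWf sg13 [tTerm dBool] := CtxWf.cons n0 tb0
  have tb1 : Typed sg13 [tTerm dBool] (tTerm dBool) DTm.type := tTermT hk0 n1 (tBool hk0 n1)
  have n2 : CtxWf sg13 [tTerm dBool, tTerm dBool] := CtxWf.cons n1 tb1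
  have v1 : Typed sg13 [tTerm dBool, tTerm dBool] (.var 1) (tTerm dBool) :=
    tVar (A := tTerm dBool) n2 (by simp) rfl
  have v0 : Typed sg13 [tTerm dBool, tTerm dBool] (.var 0) (tTerm dBool) :=
    tVar (A := tTerm dBool) n2 (by simp) rfl
  have n2a : CtxWf sg13 (tTerm dBool :: [tTerm dBool, tTerm dBool]) :=
    CtxWf.cons n2 (tTermT hk0 n2 (tBool hk0 n2))
  have ha1 : Typed sg13 (tTerm dBool :: [tTerm dBool, tTerm dBool])
      (DTm.shift 1 0 dBool) cTy := tBool hk0 n2a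
  have TP := tProofT hk n2 (tEqT hk n2 (tBool hk0 n2) ha1 v1 v0)
  have n3 : CtxWf sg13
      (tProof (tEq dBool (.var 1) (.var 0)) :: [tTerm dBool, tTerm dBool]) :=
    CtxWf.cons n2 TP
  have p2 : Typed sg13
      (tProof (tEq dBool (.var 1) (.var 0)) :: [tTerm dBool, tTerm dBool])
      (.var 2) (tTerm dBool) := tVar (A := tTerm dBool) n3 (by simp) rfl
  have Tdom := tProofT hk n3 p2
  have n4 : CtxWf sg13
      (tProof (.var 2) :: tProof (tEq dBool (.var 1) (.var 0)) ::
        [tTerm dBool, tTerm dBool]) := CtxWf.cons n3 Tdom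
  have p2' : Typed sg13
      (tProof (.var 2) :: tProof (tEq dBool (.var 1) (.var 0)) ::
        [tTerm dBool, tTerm dBool]) (.var 2) (tTerm dBool) :=
    tVar (A := tTerm dBool) n4 (by simp) rfl
  have Tin : Typed sg13
      (tProof (tEq dBool (.var 1) (.var 0)) :: [tTerm dBool, tTerm dBool])
      (.pi (tProof (.var 2)) (tProof (.var 2))) DTm.type :=
    Typed.prod Tdom (tProofT hk n4 p2') (Or.inl rfl)
  have Tmid : Typed sg13 [tTerm dBool, tTerm dBool]
      (.pi (tProof (tEq dBool (.var 1) (.var 0)))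
        (.pi (tProof (.var 2)) (tProof (.var 2)))) DTm.type :=
    Typed.prod TP Tin (Or.inl rfl)
  have hT : Typed sg13 []
      (.pi (tTerm dBool) (.pi (tTerm dBool)
        (.pi (tProof (tEq dBool (.var 1) (.var 0)))
          (.pi (tProof (.var 2)) (tProof (.var 2)))))) DTm.type :=
    Typed.prod tb0 (Typed.prod tb1 Tmid (Or.inl rfl)) (Or.inl rfl)
  exact SigWf.pushConst w hT (Or.inl rfl) rfl
theorem dTermCtx_length : ∀ Δ : List HTy, (dTermCtx Δ).length = Δ.length
  | [] => rfl
  | A :: D => by simp [dTermCtx, dTermCtx_length D]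

theorem dTermCtx_get : ∀ (Δ : List HTy) (i : ℕ) (A : HTy), Δ[i]? = some A →
    (dTermCtx Δ)[i]? = some (tTerm (transTy (fun j => (Δ.length - (i+1)) + j) A))
  | [], i, A, h => by simp at h
  | B :: D, 0, A, h => by
      obtain rfl : B = A := by simpa using h
      simp [dTermCtx]
  | B :: D, i+1, A, h => by
      have := dTermCtx_get D i A (by simpa using h)
      simpa [dTermCtx] using this

theorem tvarOk_main (Δ : List HTy) (n : ℕ) :
    TVarOk (dTermCtx Δ ++ List.replicate n cTy) (fun j => Δ.length + j) n := by
  intro j hj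
  dsimp only
  refine ⟨cTy, ?_, rfl⟩
  rw [List.getElem?_append_right (by rw [dTermCtx_length]; omega)]
  rw [dTermCtx_length]
  simp [List.getElem?_replicate, hj]

theorem tmvarOk_main (Δ : List HTy) (n : ℕ) :
    TmVarOk (dTermCtx Δ ++ List.replicate n cTy) (fun j => Δ.length + j) (fun i => i) Δ := by
  intro i B hB
  dsimp only
  have hi : i < Δ.length := (List.getElem?_eq_some_iff.mp hB).1
  refine ⟨tTerm (transTy (fun j => (Δ.length - (i+1)) + j) B), ?_, ?_⟩
  · rw [List.getElem?_append, if_pos (by rw [dTermCtx_length]; omega)]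
    exact dTermCtx_get Δ i B hB
  · rw [tTerm_transTy_shift]
    congr 1
    apply congrArg (fun ρ => transTy ρ B)
    funext j
    omega

theorem ctxWf_rep (n : ℕ) : CtxWf holSig (List.replicate n cTy) := by
  induction n with
  | zero => exact CtxWf.nil sigWf_holSig
  | succ k ih =>
      exact CtxWf.cons ih (tcTy sigOk2_holSig.toSigOk ih)

theorem ctxWf_main (n : ℕ) : ∀ Δ : List HTy, (∀ B ∈ Δ, B.tvLt n) →
    CtxWf holSig (dTermCtx Δ ++ List.replicate n cTy)
  | [], _ => ctxWf_rep n
  | B :: D, h => by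
      have ih := ctxWf_main n D (fun A hA => h A (List.mem_cons_of_mem _ hA))
      have hB : B.tvLt n := h B List.mem_cons_self
      have hty : Typed holSig (dTermCtx D ++ List.replicate n cTy)
          (tTerm (transTy (fun j => D.length + j) B)) DTm.type :=
        tTermT sigOk2_holSig.toSigOk ih
          (typTy sigOk2_holSig.toSigOk ih (tvarOk_main D n) hB)
      exact CtxWf.cons ih hty
/-- For any HOL proposition `φ` (a HOL term of type `bool`), with free type
variables `α₁, …, αₙ` and free term variables `x₁:A₁, …, xₖ:Aₖ`, the translation
of `φ` as a type is a well-formed Dedukti type: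
`Σ | α₁:type, …, αₙ:type, x₁:‖A₁‖, …, xₖ:‖Aₖ‖ ⊢ ‖φ‖ : Type`,
where `‖φ‖ = proof |φ|`. -/
theorem hol_prop_translation_is_type (n : ℕ) (Δ : List HTy) (φ : HTm)
    (ht : HTyped Δ φ .bool) (hφ : φ.tvLt n) (hΔ : ∀ B ∈ Δ, B.tvLt n) :
    Typed holSig (dTermCtx Δ ++ List.replicate n cTy)
      (tProof (transTm (fun j => Δ.length + j) (fun i => i) φ)) DTm.type := by
  have hk := sigOk2_holSig
  have hG := ctxWf_main n Δ hΔ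
  have htm : Typed holSig (dTermCtx Δ ++ List.replicate n cTy)
      (transTm (fun j => Δ.length + j) (fun i => i) φ) (tTerm dBool) :=
    typTm hk ht hG (tvarOk_main Δ n) (tmvarOk_main Δ n) hφ hΔ
  exact tProofT hk hG htm

end HolDk
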